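/- Let β ∈ (0, 1], L ≥ 0, σ ≥ 0, η ≥ 0, κ ∈ (0, 1], N > 0, a ≥ 0, b ≥ 0, and let c be a real with 0 ≤ c ≤ 1 (playing the role of ηλ). Let (ψ_t)_{t≥1} and (φ_t)_{t≥1} be sequences of nonnegative reals with ψ₁ ≤ a/N and φ₁ ≤ b/(N·κ), and for all t ≥ 1: ψ_{t+1} ≤ (1−β)·ψ_t + β·L·φ_t + 2βσ/N and φ_{t+1} ≤ (1−c)·φ_t + (2√2·η/κ)·ψ_{t+1}. Set Q = 2 + (1 + βL)·(1 + 2√2·η). Then for all t ≥ 1, φ_t ≤ Q^t·(a + b + 2βσ)/(N·κ^t). -/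

import Mathlib

set_option maxHeartbeats 1000000 in
/-- Coupled stability recursion at the core of the paper's Theorem 1
(generalization error of the Muon optimizer): the parameter-difference bound
`φ_t ≤ Q^t·(a + b + 2βσ)/(N·κ^t)` for all `t ≥ 1`. -/
theorem stmt_13 (β L σ η κ N a b c : ℝ)
    (hβ0 : 0 < β) (hβ1 : β ≤ 1) (hL : 0 ≤ L) (hσ : 0 ≤ σ) (hη : 0 ≤ η)
    (hκ0 : 0 < κ) (hκ1 : κ ≤ 1) (hN : 0 < N) (ha : 0 ≤ a) (hb : 0 ≤ b)
    (hc0 : 0 ≤ c) (hc1 : c ≤ 1)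
    (ψ φ : ℕ → ℝ)
    (hψ : ∀ t, 1 ≤ t → 0 ≤ ψ t) (hφ : ∀ t, 1 ≤ t → 0 ≤ φ t)
    (hψ1 : ψ 1 ≤ a / N) (hφ1 : φ 1 ≤ b / (N * κ))
    (hψrec : ∀ t, 1 ≤ t → ψ (t + 1) ≤ (1 - β) * ψ t + β * L * φ t + 2 * β * σ / N)
    (hφrec : ∀ t, 1 ≤ t → φ (t + 1) ≤ (1 - c) * φ t + (2 * Real.sqrt 2 * η / κ) * ψ (t + 1))
    (Q : ℝ) (hQ : Q = 2 + (1 + β * L) * (1 + 2 * Real.sqrt 2 * η)) :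
    ∀ t, 1 ≤ t → φ t ≤ Q ^ t * (a + b + 2 * β * σ) / (N * κ ^ t) := by
  have hs2 : (0:ℝ) ≤ Real.sqrt 2 := Real.sqrt_nonneg 2
  have hbL : 0 ≤ β * L := mul_nonneg hβ0.le hL
  have hη2 : 0 ≤ 2 * Real.sqrt 2 * η := by positivity
  have hQ3 : 3 + β * L ≤ Q := by nlinarith [mul_nonneg hη2 hbL]
  have hQ1 : (1:ℝ) ≤ Q := by nlinarith
  have hQpos : (0:ℝ) < Q := by linarith
  set S := a + b + 2 * β * σ with hSdef
  have hβσ : 0 ≤ 2 * β * σ := by positivity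
  have hS0 : 0 ≤ S := by simp only [hSdef]; linarith
  have haS : a ≤ S := by simp only [hSdef]; linarith
  have hbS : b ≤ S := by simp only [hSdef]; linarith
  have hσS : 2 * β * σ ≤ S := by simp only [hSdef]; linarith
  have hφcoef : 1 + 2 * Real.sqrt 2 * η * (1 + β * L) ≤ Q := by nlinarith [mul_nonneg hη2 hbL]
  -- main induction
  have key : ∀ t : ℕ, ψ (t+1) ≤ (1 + β*L) * Q^t * S / (N * κ^t) ∧
      φ (t+1) ≤ Q^(t+1) * S / (N * κ^(t+1)) := by
    intro t
    induction t with
    | zero =>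
      constructor
      · refine hψ1.trans ?_
        simp only [pow_zero, mul_one]
        have h1 : a ≤ (1 + β*L) * S := by nlinarith [mul_nonneg hbL hS0]
        exact div_le_div_of_nonneg_right h1 hN.le |>.trans_eq (by ring)
      · refine hφ1.trans ?_
        norm_num
        have h1 : b ≤ Q * S := by nlinarith [mul_nonneg (show (0:ℝ) ≤ Q - 1 by linarith) hS0]
        exact div_le_div_of_nonneg_right h1 (by positivity) |>.trans_eq (by ring)
    | succ t ih =>
      obtain ⟨ihψ, ihφ⟩ := ih
      have hK0 : (0:ℝ) < κ^t := pow_pos hκ0 t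
      have hK0' : (0:ℝ) < κ^(t+1) := pow_pos hκ0 (t+1)
      have hK0'' : (0:ℝ) < κ^(t+2) := pow_pos hκ0 (t+2)
      have hP1 : (1:ℝ) ≤ Q^t := one_le_pow₀ hQ1
      have hP1' : (1:ℝ) ≤ Q^(t+1) := one_le_pow₀ hQ1
      have hPS : 0 ≤ Q^t * S := mul_nonneg (by linarith) hS0
      have hPS' : 0 ≤ Q^(t+1) * S := mul_nonneg (by linarith) hS0
      have hdd : N * κ^(t+1) ≤ N * κ^t := by
        have h := mul_nonneg (sub_nonneg.2 hκ1) (mul_pos hN hK0).le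
        rw [pow_succ]; nlinarith
      have hdd' : N * κ^(t+2) ≤ N * κ^(t+1) := by
        have h := mul_nonneg (sub_nonneg.2 hκ1) (mul_pos hN hK0').le
        rw [pow_succ κ (t+1)]; nlinarith
      have hdN : N * κ^(t+1) ≤ N := by
        have h := mul_nonneg (sub_nonneg.2 (pow_le_one₀ hκ0.le hκ1 : κ^(t+1) ≤ 1)) hN.le
        nlinarith
      -- ψ step
      have hψstep : ψ (t+2) ≤ (1 + β*L) * Q^(t+1) * S / (N * κ^(t+1)) := by
        have h0 := hψrec (t+1) (by omega)
        have hψnn := hψ (t+1) (by omega)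
        have h1 : ψ (t+2) ≤ ψ (t+1) + β*L * φ (t+1) + 2*β*σ/N := by
          have hb' : (1-β) * ψ (t+1) ≤ ψ (t+1) := by nlinarith
          calc ψ (t+1+1) ≤ (1 - β) * ψ (t+1) + β * L * φ (t+1) + 2 * β * σ / N := h0
            _ ≤ ψ (t+1) + β*L * φ (t+1) + 2*β*σ/N := by linarith
        have tA : ψ (t+1) ≤ (1 + β*L) * Q^t * S / (N * κ^(t+1)) :=
          ihψ.trans (div_le_div₀ (by positivity) le_rfl (by positivity) hdd)
        have tB : β*L * φ (t+1) ≤ β*L * Q^(t+1) * S / (N * κ^(t+1)) := by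
          have h := mul_le_mul_of_nonneg_left ihφ hbL
          calc β*L * φ (t+1) ≤ β*L * (Q^(t+1) * S / (N * κ^(t+1))) := h
            _ = β*L * Q^(t+1) * S / (N * κ^(t+1)) := by ring
        have tC : 2*β*σ/N ≤ Q^t * S / (N * κ^(t+1)) := by
          refine div_le_div₀ hPS ?_ (by positivity) hdN
          nlinarith [mul_nonneg (sub_nonneg.2 hP1) hS0]
        have hnum : (1 + β*L) * Q^t * S + β*L * Q^(t+1) * S + Q^t * S ≤
            (1 + β*L) * Q^(t+1) * S := by
          have h := mul_le_mul_of_nonneg_right (show 2 + β*L ≤ Q by linarith) hPS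
          calc (1 + β*L) * Q^t * S + β*L * Q^(t+1) * S + Q^t * S
              = (2 + β*L) * (Q^t * S) + β*L * (Q^(t+1) * S) := by ring
            _ ≤ Q * (Q^t * S) + β*L * (Q^(t+1) * S) := by linarith
            _ = (1 + β*L) * Q^(t+1) * S := by rw [pow_succ]; ring
        have h3 : (1 + β*L) * Q^t * S / (N * κ^(t+1))
            + β*L * Q^(t+1) * S / (N * κ^(t+1))
            + Q^t * S / (N * κ^(t+1)) ≤ (1 + β*L) * Q^(t+1) * S / (N * κ^(t+1)) := by
          rw [← add_div, ← add_div]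
          exact div_le_div_of_nonneg_right hnum (by positivity) |>.trans_eq (by ring)
        linarith
      refine ⟨hψstep, ?_⟩
      -- φ step
      have h0 := hφrec (t+1) (by omega)
      have hφnn := hφ (t+1) (by omega)
      have h1 : φ (t+2) ≤ φ (t+1) + (2 * Real.sqrt 2 * η / κ) * ψ (t+2) := by
        have hb' : (1-c) * φ (t+1) ≤ φ (t+1) := by nlinarith
        calc φ (t+1+1) ≤ (1 - c) * φ (t+1) + (2 * Real.sqrt 2 * η / κ) * ψ (t+1+1) := h0
          _ ≤ φ (t+1) + (2 * Real.sqrt 2 * η / κ) * ψ (t+2) := by linarith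
      have h2 : (2 * Real.sqrt 2 * η / κ) * ψ (t+2) ≤
          2 * Real.sqrt 2 * η * ((1 + β*L) * Q^(t+1) * S) / (N * κ^(t+2)) := by
        have hcnn : 0 ≤ 2 * Real.sqrt 2 * η / κ := by positivity
        refine (mul_le_mul_of_nonneg_left hψstep hcnn).trans_eq ?_
        rw [pow_succ κ (t+1)]
        ring
      have h3 : φ (t+1) ≤ Q^(t+1) * S / (N * κ^(t+2)) :=
        ihφ.trans (div_le_div₀ hPS' le_rfl (by positivity) hdd')
      have hnum : Q^(t+1) * S + 2 * Real.sqrt 2 * η * ((1 + β*L) * Q^(t+1) * S)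
          ≤ Q^(t+2) * S := by
        have h := mul_le_mul_of_nonneg_right hφcoef hPS'
        calc Q^(t+1) * S + 2 * Real.sqrt 2 * η * ((1 + β*L) * Q^(t+1) * S)
            = (1 + 2 * Real.sqrt 2 * η * (1 + β*L)) * (Q^(t+1) * S) := by ring
          _ ≤ Q * (Q^(t+1) * S) := h
          _ = Q^(t+2) * S := by rw [pow_succ]; ring
      have h4 : Q^(t+1) * S / (N * κ^(t+2))
          + 2 * Real.sqrt 2 * η * ((1 + β*L) * Q^(t+1) * S) / (N * κ^(t+2))
          ≤ Q^(t+2) * S / (N * κ^(t+2)) := by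
        rw [← add_div]
        exact div_le_div_of_nonneg_right hnum (by positivity)
      calc φ (t+1+1) ≤ φ (t+1) + (2 * Real.sqrt 2 * η / κ) * ψ (t+2) := h1
        _ ≤ Q^(t+1) * S / (N * κ^(t+2))
            + 2 * Real.sqrt 2 * η * ((1 + β*L) * Q^(t+1) * S) / (N * κ^(t+2)) := by linarith
        _ ≤ Q^(t+2) * S / (N * κ^(t+2)) := h4
  intro t ht
  obtain ⟨s, rfl⟩ : ∃ s, t = s + 1 := ⟨t - 1, by omega⟩
  exact (key s).2
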